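/- arXiv:1902.08529 — 6 statements merged into one kernel-verified Lean document; each statement's English description precedes it below -/
import Mathlib

section
/- For all rational numbers $Q_j, u_j, d_j, L_j, e_j$ ($j=1,2,3$), the identity $\sum_{j=1}^{3}(Q_j + d_j - L_j - e_j) = \tfrac{8}{3}\mathcal{A}_{331'} - \tfrac{1}{4}\mathcal{A}_{111'} - \mathcal{A}_{221'}$ holds. In particular, if $\mathcal{A}_{111'} = \mathcal{A}_{221'} = \mathcal{A}_{331'} = 0$ then $\sum_{j=1}^{3}(Q_j + d_j - L_j - e_j) = 0$ (the type-II sum rule). -/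
/-- The `U(1)_Y`-`U(1)_Y`-`U(1)'` anomaly coefficient. -/
def A111 (Q u d L e : Fin 3 → ℚ) : ℚ :=
  2/3 * ∑ j, (Q j + 8 * u j + 2 * d j + 3 * L j + 6 * e j)

/-- The `SU(2)_L`-`SU(2)_L`-`U(1)'` anomaly coefficient. -/
def A221 (Q L : Fin 3 → ℚ) : ℚ :=
  1/2 * ∑ j, (3 * Q j + L j)

/-- The `SU(3)_C`-`SU(3)_C`-`U(1)'` anomaly coefficient. -/
def A331 (Q u d : Fin 3 → ℚ) : ℚ :=
  1/2 * ∑ j, (2 * Q j + u j + d j)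

/-- The type-II sum rule: the identity
`∑ (Q_j + d_j - L_j - e_j) = 8/3 ⬝ A_{33'} - 1/4 ⬝ A_{111'} - A_{221'}`,
and hence the sum vanishes when all three anomaly coefficients vanish. -/
theorem typeII_sum_rule (Q u d L e : Fin 3 → ℚ) :
    (∑ j, (Q j + d j - L j - e j)) =
      8/3 * A331 Q u d - 1/4 * A111 Q u d L e - A221 Q L ∧
    (A111 Q u d L e = 0 → A221 Q L = 0 → A331 Q u d = 0 →
      (∑ j, (Q j + d j - L j - e j)) = 0) := by
  have h : (∑ j, (Q j + d j - L j - e j)) =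
      8/3 * A331 Q u d - 1/4 * A111 Q u d L e - A221 Q L := by
    simp [A111, A221, A331, Fin.sum_univ_three]; ring
  exact ⟨h, fun h1 h2 h3 => by rw [h, h1, h2, h3]; ring⟩
end

section
/- Let $Q_j, u_j, L_j, e_j$ ($j=1,2,3$) and $H_1, H_2$ be rational numbers with $\mathcal{A}_{111'} = \mathcal{A}_{221'} = \mathcal{A}_{331'} = 0$. Define the type-II suppression exponents $n^{u}_i = Q_i + u_i + H_2$ and $n^{e}_i = L_i + e_i - H_1$ for $i=1,2,3$. Then $\sum_{i=1}^{3} n^{u}_i + \sum_{i=1}^{3} n^{e}_i = 3(H_2 - H_1)$; in particular this sum of exponents is an integer if and only if $3(H_2 - H_1)$ is an integer. -/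
/-- In a type-II model with vanishing anomalies, the sum of the up-type and
charged-lepton suppression exponents equals `3 (H₂ - H₁)`; in particular it is an
integer iff `3 (H₂ - H₁)` is. -/
theorem typeII_higgs_difference (Q u d L e : Fin 3 → ℚ) (H₁ H₂ : ℚ)
    (h111 : A111 Q u d L e = 0) (h221 : A221 Q L = 0) (h331 : A331 Q u d = 0) :
    (∑ i, (Q i + u i + H₂)) + (∑ i, (L i + e i - H₁)) = 3 * (H₂ - H₁) ∧
    ((∃ n : ℤ, (∑ i, (Q i + u i + H₂)) + (∑ i, (L i + e i - H₁)) = n) ↔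
      ∃ n : ℤ, 3 * (H₂ - H₁) = n) := by
  simp only [A111, A221, A331, Fin.sum_univ_three] at h111 h221 h331 ⊢
  constructor
  · linarith
  · constructor <;> rintro ⟨n, hn⟩ <;> exact ⟨n, by linarith⟩
end

section
/- The rational charge assignment $Q = (\tfrac{8}{27}, -\tfrac{19}{27}, -\tfrac{73}{27})$, $u = (\tfrac{26}{27}, -\tfrac{28}{27}, -\tfrac{82}{27})$, $d = (\tfrac{34}{9}, \tfrac{25}{9}, \tfrac{25}{9})$, $L = (\tfrac{94}{27}, \tfrac{79}{27}, \tfrac{79}{27})$, $e = (\tfrac{43}{27}, -\tfrac{50}{27}, -\tfrac{77}{27})$, $\nu = (-\tfrac{3116597}{199755}, \tfrac{30795}{193}, -\tfrac{18344}{115})$, $H_1 = -\tfrac{79}{27}$, $H_2 = \tfrac{155}{27}$ satisfies every equation of the anomaly-free 2HDM system (★). -/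
/-- The anomaly-free 2HDM system (★): anomaly conditions, no kinetic mixing, and the
Froggatt-Nielsen phenomenological constraints. -/
def SystemStar (Q u d L e ν : Fin 3 → ℚ) (H₁ H₂ : ℚ) : Prop :=
  (∑ j, (Q j ^ 2 - 2 * u j ^ 2 + d j ^ 2 - L j ^ 2 + e j ^ 2)) = 0 ∧
  (∑ j, (Q j + 8 * u j + 2 * d j + 3 * L j + 6 * e j)) = 0 ∧
  (∑ j, (2 * Q j + u j + d j)) = 0 ∧
  (∑ j, (3 * Q j + L j)) = 0 ∧
  (∑ j, (6 * Q j ^ 3 + 3 * u j ^ 3 + 3 * d j ^ 3 + 2 * L j ^ 3 + e j ^ 3 + ν j ^ 3)) = 0 ∧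
  (∑ j, (2 * L j + e j + ν j)) = 0 ∧
  (∑ j, (2 * Q j - 4 * u j + 2 * d j - 2 * L j + 2 * e j)) = 0 ∧
  Q 2 + u 2 + H₂ = 0 ∧ Q 1 + u 1 + H₂ = 4 ∧ Q 0 + u 0 + H₂ = 7 ∧
  Q 2 + d 2 - H₁ = 3 ∧ Q 1 + d 1 - H₁ = 5 ∧ Q 0 + d 0 - H₁ = 7 ∧
  L 2 + e 2 - H₁ = 3 ∧ L 1 + e 1 - H₁ = 4 ∧ L 0 + e 0 - H₁ = 8 ∧
  Q 0 - Q 1 = 1 ∧ Q 1 - Q 2 = 2 ∧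
  L 1 - L 2 = 0 ∧ L 1 + H₁ = 0

/-- The explicit rational charge assignment of Table 1 satisfies every equation of the
anomaly-free 2HDM system (★). -/
theorem charges_satisfy_systemStar :
    SystemStar ![8/27, -19/27, -73/27] ![26/27, -28/27, -82/27]
      ![34/9, 25/9, 25/9] ![94/27, 79/27, 79/27] ![43/27, -50/27, -77/27]
      ![-3116597/199755, 30795/193, -18344/115] (-79/27) (155/27) := by
  unfold SystemStar
  refine ⟨?_,?_,?_,?_,?_,?_,?_,?_,?_,?_,?_,?_,?_,?_,?_,?_,?_,?_,?_,?_⟩ <;> norm_num [Fin.sum_univ_three, Matrix.cons_val_two, Matrix.tail_cons, Matrix.head_cons]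
end

section
/- Rational numbers $Q_j, u_j, d_j, L_j, e_j, \nu_j$ ($j=1,2,3$), $H_1, H_2$ satisfy the anomaly-free 2HDM system (★) if and only if: $Q_1 = \tfrac{8}{27}$, $Q_2 = -\tfrac{19}{27}$, $Q_3 = -\tfrac{73}{27}$, $u_1 = \tfrac{26}{27}$, $u_2 = -\tfrac{28}{27}$, $u_3 = -\tfrac{82}{27}$, $d_1 = \tfrac{34}{9}$, $d_2 = \tfrac{25}{9}$, $d_3 = \tfrac{25}{9}$, $L_1 = \tfrac{94}{27}$, $L_2 = \tfrac{79}{27}$, $L_3 = \tfrac{79}{27}$, $e_1 = \tfrac{43}{27}$, $e_2 = -\tfrac{50}{27}$, $e_3 = -\tfrac{77}{27}$, $H_1 = -\tfrac{79}{27}$, $H_2 = \tfrac{155}{27}$, together with $\nu_1 + \nu_2 + \nu_3 = -\tfrac{140}{9}$ and $\nu_2^2\nu_3 + \tfrac{140}{9}\nu_2^2 + \nu_2\nu_3^2 + \tfrac{280}{9}\nu_2\nu_3 + \tfrac{19600}{81}\nu_2 + \tfrac{140}{9}\nu_3^2 + \tfrac{19600}{81}\nu_3 + \tfrac{95036}{81}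 = 0$. -/
set_option maxHeartbeats 1600000 in
/-- The Gröbner basis of the system (★): the charges of the SM fields and the Higgs
fields are determined uniquely and the right-handed singlet charges satisfy a linear
and a cubic equation. -/
theorem systemStar_iff_groebner (Q u d L e ν : Fin 3 → ℚ) (H₁ H₂ : ℚ) :
    SystemStar Q u d L e ν H₁ H₂ ↔
      (Q 0 = 8/27 ∧ Q 1 = -19/27 ∧ Q 2 = -73/27 ∧
       u 0 = 26/27 ∧ u 1 = -28/27 ∧ u 2 = -82/27 ∧
       d 0 = 34/9 ∧ d 1 = 25/9 ∧ d 2 = 25/9 ∧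
       L 0 = 94/27 ∧ L 1 = 79/27 ∧ L 2 = 79/27 ∧
       e 0 = 43/27 ∧ e 1 = -50/27 ∧ e 2 = -77/27 ∧
       H₁ = -79/27 ∧ H₂ = 155/27 ∧
       ν 0 + ν 1 + ν 2 = -140/9 ∧
       ν 1 ^ 2 * ν 2 + 140/9 * ν 1 ^ 2 + ν 1 * ν 2 ^ 2 + 280/9 * ν 1 * ν 2
         + 19600/81 * ν 1 + 140/9 * ν 2 ^ 2 + 19600/81 * ν 2 + 95036/81 = 0) := by
  unfold SystemStar
  simp only [Fin.sum_univ_three]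
  constructor
  · rintro ⟨h1, h2, h3, h4, h5, h6, h7, p1, p2, p3, p4, p5, p6, p7, p8, p9, p10,
      p11, p12, p13⟩
    -- Solve the linear subsystem in terms of s = ν 0 + ν 1 + ν 2
    have hQ0 : Q 0 = 4/3 + (ν 0 + ν 1 + ν 2) / 15 := by linarith
    have hQ1 : Q 1 = 1/3 + (ν 0 + ν 1 + ν 2) / 15 := by linarith
    have hQ2 : Q 2 = -5/3 + (ν 0 + ν 1 + ν 2) / 15 := by linarith
    have hu0 : u 0 = 2 + (ν 0 + ν 1 + ν 2) / 15 := by linarith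
    have hu1 : u 1 = (ν 0 + ν 1 + ν 2) / 15 := by linarith
    have hu2 : u 2 = -2 + (ν 0 + ν 1 + ν 2) / 15 := by linarith
    have hd0 : d 0 = 2/3 - (ν 0 + ν 1 + ν 2) / 5 := by linarith
    have hd1 : d 1 = -1/3 - (ν 0 + ν 1 + ν 2) / 5 := by linarith
    have hd2 : d 2 = -1/3 - (ν 0 + ν 1 + ν 2) / 5 := by linarith
    have hL0 : L 0 = -10 - 13 * (ν 0 + ν 1 + ν 2) / 15 := by linarith
    have hL1 : L 1 = 5 + 2 * (ν 0 + ν 1 + ν 2) / 15 := by linarith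
    have hL2 : L 2 = 5 + 2 * (ν 0 + ν 1 + ν 2) / 15 := by linarith
    have he0 : e 0 = 13 + 11 * (ν 0 + ν 1 + ν 2) / 15 := by linarith
    have he1 : e 1 = -6 - 4 * (ν 0 + ν 1 + ν 2) / 15 := by linarith
    have he2 : e 2 = -7 - 4 * (ν 0 + ν 1 + ν 2) / 15 := by linarith
    -- The quadratic equation degenerates to a linear one in s
    rw [hQ0, hQ1, hQ2, hu0, hu1, hu2, hd0, hd1, hd2, hL0, hL1, hL2, he0, he1, he2]
      at h1
    have hs : ν 0 + ν 1 + ν 2 = -140/9 := by linear_combination h1 / 6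
    -- Now all charges are determined
    refine ⟨by linarith, by linarith, by linarith, by linarith, by linarith,
      by linarith, by linarith, by linarith, by linarith, by linarith, by linarith,
      by linarith, by linarith, by linarith, by linarith, by linarith, by linarith,
      hs, ?_⟩
    -- The cubic condition on ν
    rw [hQ0, hQ1, hQ2, hu0, hu1, hu2, hd0, hd1, hd2, hL0, hL1, hL2, he0, he1, he2,
      hs] at h5
    linear_combination (-1/3 : ℚ) * h5 +
      ((ν 0 ^ 2 - (140/9 + ν 1 + ν 2) * ν 0 + (140/9 + ν 1 + ν 2) ^ 2) / 3) * hs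
  · rintro ⟨hQ0, hQ1, hQ2, hu0, hu1, hu2, hd0, hd1, hd2, hL0, hL1, hL2, he0, he1,
      he2, hH1, hH2, hs, hT⟩
    rw [hQ0, hQ1, hQ2, hu0, hu1, hu2, hd0, hd1, hd2, hL0, hL1, hL2, he0, he1, he2,
      hH1, hH2]
    refine ⟨by ring, by ring, by ring, by ring, ?_, by linarith, by ring,
      by ring, by ring, by ring, by ring, by ring, by ring, by ring, by ring,
      by ring, by ring, by ring, by ring, by ring⟩
    linear_combination (-3 : ℚ) * hT +
      (ν 0 ^ 2 - (140/9 + ν 1 + ν 2) * ν 0 + (140/9 + ν 1 + ν 2) ^ 2) * hs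
end

section
/- For all rational numbers $Q_j, d_j, L_j, e_j, u_j$ ($j=1,2,3$) and $H_u, H_d$, defining the supersymmetric suppression exponents $n^{d}_i = Q_i + d_i + H_d$ and $n^{e}_i = L_i + e_i + H_d$, the identity $\sum_{i=1}^{3} n^{d}_i - \sum_{i=1}^{3} n^{e}_i = H_u + H_d - \big(\tfrac{1}{4}\mathcal{A}'_{111'} + \mathcal{A}'_{221'} - \tfrac{8}{3}\mathcal{A}'_{331'}\big)$ holds. -/
/-- The supersymmetric `SU(3)_C`-`SU(3)_C`-`U(1)'` anomaly coefficient. -/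
def A331' (Q u d : Fin 3 → ℚ) : ℚ :=
  1/2 * ∑ j, (2 * Q j + u j + d j)

/-- The supersymmetric `SU(2)_L`-`SU(2)_L`-`U(1)'` anomaly coefficient. -/
def A221' (Q L : Fin 3 → ℚ) (Hu Hd : ℚ) : ℚ :=
  1/2 * (Hu + Hd) + 1/2 * ∑ j, (3 * Q j + L j)

/-- The supersymmetric `U(1)_Y`-`U(1)_Y`-`U(1)'` anomaly coefficient. -/
def A111' (Q u d L e : Fin 3 → ℚ) (Hu Hd : ℚ) : ℚ :=
  2 * (Hu + Hd) + 2/3 * ∑ j, (Q j + 8 * u j + 2 * d j + 3 * L j + 6 * e j)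

/-- The supersymmetric down/lepton sum rule: with suppression exponents
`n^d_i = Q_i + d_i + H_d` and `n^e_i = L_i + e_i + H_d`, one has
`∑ n^d_i - ∑ n^e_i = H_u + H_d - (1/4 ⬝ A'_{111'} + A'_{221'} - 8/3 ⬝ A'_{331'})`. -/
theorem susy_down_lepton_sum_rule (Q u d L e : Fin 3 → ℚ) (Hu Hd : ℚ) :
    (∑ i, (Q i + d i + Hd)) - (∑ i, (L i + e i + Hd)) =
      Hu + Hd - (1/4 * A111' Q u d L e Hu Hd + A221' Q L Hu Hd
        - 8/3 * A331' Q u d) := by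
  simp only [A111', A221', A331', Fin.sum_univ_three]
  ring
end

section
/- There do not exist rational numbers $Q_j, u_j, d_j, L_j, e_j$ ($j=1,2,3$) and $H_u, H_d$ such that the supersymmetric anomaly coefficients all vanish, $\mathcal{A}'_{111'} = \mathcal{A}'_{221'} = \mathcal{A}'_{331'} = 0$, and simultaneously the Froggatt-Nielsen suppression equations hold: $Q_1+u_1+H_u=7$, $Q_2+u_2+H_u=3$, $Q_3+u_3+H_u=0$, $Q_1+d_1+H_d=7$, $Q_2+d_2+H_d=5$, $Q_3+d_3+H_d=2$, $L_1+e_1+H_d=8$, $L_2+e_2+H_d=4$, $L_3+e_3+H_d=3$. (I.e., the Froggatt-Nielsen mechanism, vanishing anomalies, and supersymmetry cannot be combined.) -/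
/-- The Froggatt-Nielsen mechanism, vanishing anomalies and supersymmetry cannot be
combined: there is no rational charge assignment with all supersymmetric anomaly
coefficients vanishing and satisfying the imposed suppression equations. -/
theorem susy_anomaly_free_FN_impossible :
    ¬ ∃ (Q u d L e : Fin 3 → ℚ) (Hu Hd : ℚ),
      A111' Q u d L e Hu Hd = 0 ∧ A221' Q L Hu Hd = 0 ∧ A331' Q u d = 0 ∧
      Q 0 + u 0 + Hu = 7 ∧ Q 1 + u 1 + Hu = 3 ∧ Q 2 + u 2 + Hu = 0 ∧
      Q 0 + d 0 + Hd = 7 ∧ Q 1 + d 1 + Hd = 5 ∧ Q 2 + d 2 + Hd = 2 ∧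
      L 0 + e 0 + Hd = 8 ∧ L 1 + e 1 + Hd = 4 ∧ L 2 + e 2 + Hd = 3 := by
  rintro ⟨Q,u,d,L,e,Hu,Hd,h1,h2,h3,h4,h5,h6,h7,h8,h9,h10,h11,h12⟩
  simp only [A111', A221', A331', Fin.sum_univ_three] at h1 h2 h3
  linarith
end
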